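/- arXiv:quant-ph/0009038 — 2 statements merged into one kernel-verified Lean document; each statement's English description precedes it below -/
import Mathlib

section
/- Let L be an orthomodular ortholattice. Then L satisfies the distributive inference: for all a, b, c, d, e, f ∈ L, if d ≤ a →₁ c and d ⊓ (b →₁ c) ≤ e and e ⊔ f ≤ a ≡c b, then d ⊓ (e ⊔ f) = (d ⊓ e) ⊔ (d ⊓ f) — if and only if L satisfies the 3OA law: for all a, b, c ∈ L, (a →₁ c) ⊓ (a ≡c b) ≤ b →₁ c. -/
/-- An ortholattice: a bounded lattice with an orthocomplementation. -/
class Ortholattice (α : Type*) extends Lattice α, BoundedOrder α, Compl α where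
  compl_compl : ∀ x : α, xᶜᶜ = x
  compl_antitone : ∀ x y : α, x ≤ y → yᶜ ≤ xᶜ
  inf_compl : ∀ x : α, x ⊓ xᶜ = ⊥
  sup_compl : ∀ x : α, x ⊔ xᶜ = ⊤

/-- The Sasaki implication `a →₁ b = aᶜ ⊔ (a ⊓ b)`. -/
def olImp1 {α : Type*} [Ortholattice α] (a b : α) : α := aᶜ ⊔ (a ⊓ b)

/-- The 3-variable orthoarguesian identity
`a ≡c b = ((a →₁ c) ⊓ (b →₁ c)) ⊔ ((aᶜ →₁ c) ⊓ (bᶜ →₁ c))`. -/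
def oa3 {α : Type*} [Ortholattice α] (c a b : α) : α :=
  (olImp1 a c ⊓ olImp1 b c) ⊔ (olImp1 aᶜ c ⊓ olImp1 bᶜ c)

/-- The 4-variable orthoarguesian identity
`a ≡(c,d) b = (a ≡d b) ⊔ ((a ≡d c) ⊓ (b ≡d c))`. -/
def oa4 {α : Type*} [Ortholattice α] (c d a b : α) : α :=
  oa3 d a b ⊔ (oa3 d a c ⊓ oa3 d b c)

namespace OLAux

variable {α : Type*} [Ortholattice α]

lemma cc (x : α) : xᶜᶜ = x := Ortholattice.compl_compl x

lemma anti {x y : α} (h : x ≤ y) : yᶜ ≤ xᶜ := Ortholattice.compl_antitone x y h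

lemma le_compl_of_le_compl {x y : α} (h : x ≤ yᶜ) : y ≤ xᶜ := by
  have := anti h; rw [cc] at this; exact this

lemma compl_inf (x y : α) : (x ⊓ y)ᶜ = xᶜ ⊔ yᶜ := by
  have h1 : (xᶜ ⊔ yᶜ)ᶜ ≤ x := by
    have := anti (le_sup_left (a := xᶜ) (b := yᶜ)); rwa [cc] at this
  have h2 : (xᶜ ⊔ yᶜ)ᶜ ≤ y := by
    have := anti (le_sup_right (a := xᶜ) (b := yᶜ)); rwa [cc] at this
  refine le_antisymm ?_ (sup_le (anti inf_le_left) (anti inf_le_right))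
  have := anti (le_inf h1 h2); rwa [cc] at this

lemma compl_sup (x y : α) : (x ⊔ y)ᶜ = xᶜ ⊓ yᶜ := by
  have := congrArg (·ᶜ) (compl_inf xᶜ yᶜ)
  simp only [cc] at this
  rw [← this]

lemma inf_compl_bot (x : α) : x ⊓ xᶜ = ⊥ := Ortholattice.inf_compl x

/-- commutes -/
def Cm (a b : α) : Prop := (a ⊓ b) ⊔ (a ⊓ bᶜ) = a

lemma cm_of_le {a b : α} (h : a ≤ b) : Cm a b := by
  unfold Cm; rw [inf_eq_left.mpr h, sup_eq_left.mpr inf_le_left]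

lemma cm_of_le_compl {a b : α} (h : a ≤ bᶜ) : Cm a b := by
  unfold Cm
  have h1 : a ⊓ b = ⊥ := le_bot_iff.mp (by
    calc a ⊓ b ≤ bᶜ ⊓ b := inf_le_inf_right b h
      _ = ⊥ := by rw [inf_comm]; exact inf_compl_bot b)
  rw [h1, bot_sup_eq, inf_eq_left.mpr h]

lemma cm_compl {a b : α} (h : Cm a b) : Cm a bᶜ := by
  unfold Cm at *; rw [cc, sup_comm]; exact h

variable (hOM : ∀ a b : α, a ≤ b → a ⊔ (aᶜ ⊓ b) = b)

include hOM

lemma cm_of_ge {a b : α} (h : b ≤ a) : Cm a b := by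
  unfold Cm
  rw [inf_eq_right.mpr h, inf_comm]
  exact hOM b a h

lemma cm_symm {a b : α} (h : Cm a b) : Cm b a := by
  unfold Cm at *
  have h1 : aᶜ = (a ⊓ b)ᶜ ⊓ (a ⊓ bᶜ)ᶜ := by rw [← compl_sup, h]
  have hbc : b ≤ (a ⊓ bᶜ)ᶜ := le_compl_of_le_compl inf_le_right
  have h2 : b ⊓ aᶜ = b ⊓ (a ⊓ b)ᶜ := by
    apply le_antisymm
    · exact le_inf inf_le_left (le_trans inf_le_right (anti inf_le_left))
    · refine le_inf inf_le_left ?_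
      rw [h1]
      exact le_inf inf_le_right (le_trans inf_le_left hbc)
  rw [h2, inf_comm b a, inf_comm b _]
  exact hOM _ _ inf_le_right

lemma cm_sup {a b c : α} (hab : Cm a b) (hac : Cm a c) : Cm a (b ⊔ c) := by
  apply cm_symm hOM
  have hb := cm_symm hOM hab
  have hc := cm_symm hOM hac
  unfold Cm at *
  apply le_antisymm (sup_le inf_le_left inf_le_left)
  calc b ⊔ c = ((b ⊓ a) ⊔ (b ⊓ aᶜ)) ⊔ ((c ⊓ a) ⊔ (c ⊓ aᶜ)) := by rw [hb, hc]
    _ ≤ ((b ⊔ c) ⊓ a) ⊔ ((b ⊔ c) ⊓ aᶜ) := by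
        apply sup_le <;> apply sup_le
        · exact le_sup_of_le_left (inf_le_inf_right a le_sup_left)
        · exact le_sup_of_le_right (inf_le_inf_right aᶜ le_sup_left)
        · exact le_sup_of_le_left (inf_le_inf_right a le_sup_right)
        · exact le_sup_of_le_right (inf_le_inf_right aᶜ le_sup_right)

lemma cm_inf {a b c : α} (hab : Cm a b) (hac : Cm a c) : Cm a (b ⊓ c) := by
  have := cm_compl (cm_sup hOM (cm_compl hab) (cm_compl hac))
  rwa [compl_sup, cc, cc] at this

lemma om' {b w : α} (h : w ≤ bᶜ) : bᶜ ⊓ (b ⊔ w) = w := by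
  have h' : b ≤ wᶜ := le_compl_of_le_compl h
  have := congrArg (·ᶜ) (hOM b wᶜ h')
  simp only [compl_sup, compl_inf, cc] at this
  exact this

/-- Foulis–Holland: if `b` commutes with `a` and `c` then
`a ⊓ (b ⊔ c) = (a ⊓ b) ⊔ (a ⊓ c)`. -/
lemma fh {a b c : α} (hba : Cm b a) (hbc : Cm b c) :
    a ⊓ (b ⊔ c) = (a ⊓ b) ⊔ (a ⊓ c) := by
  set d := (a ⊓ b) ⊔ (a ⊓ c) with hd_def
  have hd : d ≤ a ⊓ (b ⊔ c) :=
    sup_le (le_inf inf_le_left (le_trans inf_le_right le_sup_left))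
      (le_inf inf_le_left (le_trans inf_le_right le_sup_right))
  set g := dᶜ ⊓ (a ⊓ (b ⊔ c)) with hg_def
  have hga : g ≤ a := le_trans inf_le_right inf_le_left
  have hgbc : g ≤ b ⊔ c := le_trans inf_le_right inf_le_right
  have hgd : g ≤ dᶜ := inf_le_left
  have hbd : Cm b d := cm_sup hOM (cm_of_ge hOM inf_le_right) (cm_inf hOM hba hbc)
  have hbg : Cm b g :=
    cm_inf hOM (cm_compl hbd) (cm_inf hOM hba (cm_of_le le_sup_left))
  have hgb : Cm g b := cm_symm hOM hbg
  have hg_b : g ⊓ b = ⊥ := by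
    have h1 : g ⊓ b ≤ d := le_sup_of_le_left (inf_le_inf_right b hga)
    have h2 : g ⊓ b ≤ dᶜ := le_trans inf_le_left hgd
    exact le_bot_iff.mp (by calc g ⊓ b ≤ d ⊓ dᶜ := le_inf h1 h2
      _ = ⊥ := inf_compl_bot d)
  have hgbc' : g ≤ bᶜ := by
    have : g = g ⊓ bᶜ := by
      conv_lhs => rw [← hgb]
      rw [hg_b, bot_sup_eq]
    rw [this]; exact inf_le_right
  -- b ⊔ c = b ⊔ (c ⊓ bᶜ)
  have hcb := cm_symm hOM hbc
  have hbc_eq : b ⊔ c = b ⊔ (c ⊓ bᶜ) := by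
    conv_lhs => rw [← hcb]
    rw [← sup_assoc, sup_eq_left.mpr (inf_le_right : c ⊓ b ≤ b)]
  have hom' : bᶜ ⊓ (b ⊔ c) = c ⊓ bᶜ := by
    rw [hbc_eq]; exact om' hOM inf_le_right
  have hgc : g ≤ c := by
    have : g ≤ bᶜ ⊓ (b ⊔ c) := le_inf hgbc' hgbc
    rw [hom'] at this
    exact le_trans this inf_le_left
  have hgbot : g = ⊥ := by
    have h1 : g ≤ d := le_sup_of_le_right (le_inf hga hgc)
    exact le_bot_iff.mp (by calc g ≤ d ⊓ dᶜ := le_inf h1 hgd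
      _ = ⊥ := inf_compl_bot d)
  have := hOM d (a ⊓ (b ⊔ c)) hd
  rw [← hg_def, hgbot, sup_bot_eq] at this
  exact this.symm

/-- Lemma A: `(a →₁ c) ⊓ (aᶜ →₁ c) ≤ c`. -/
lemma lemA (a c : α) : olImp1 a c ⊓ olImp1 aᶜ c ≤ c := by
  unfold olImp1
  rw [cc]
  set p := a ⊓ c
  set q := aᶜ ⊓ c
  have hap : Cm a p := cm_of_ge hOM inf_le_left
  have haq : Cm a q := cm_of_le_compl (le_compl_of_le_compl inf_le_left)
  have haa : Cm a aᶜ := cm_compl (cm_of_le le_rfl)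
  have hat : Cm a (aᶜ ⊔ p) := cm_sup hOM haa hap
  -- distribute over a ⊔ q with commuter a
  have h1 : (aᶜ ⊔ p) ⊓ (a ⊔ q) = ((aᶜ ⊔ p) ⊓ a) ⊔ ((aᶜ ⊔ p) ⊓ q) :=
    fh hOM hat haq
  -- (aᶜ ⊔ p) ⊓ a = a ⊓ (aᶜ ⊔ p) = (a ⊓ aᶜ) ⊔ (a ⊓ p) = p
  have hca : Cm aᶜ a := cm_symm hOM haa
  have hcp : Cm aᶜ p := cm_symm hOM (cm_compl (cm_of_le inf_le_left))
  have h2 : a ⊓ (aᶜ ⊔ p) = (a ⊓ aᶜ) ⊔ (a ⊓ p) := fh hOM hca hcp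
  rw [inf_compl_bot, bot_sup_eq, inf_eq_right.mpr inf_le_left] at h2
  rw [h1, inf_comm (aᶜ ⊔ p) a, h2]
  exact sup_le inf_le_right (le_trans inf_le_right inf_le_right)

/-- Lemma B: `c ⊓ (bᶜ →₁ c) ≤ b →₁ c`. -/
lemma lemB (b c : α) : c ⊓ olImp1 bᶜ c ≤ olImp1 b c := by
  unfold olImp1
  rw [cc]
  set u := bᶜ ⊓ c
  have huc : Cm u c := cm_of_le inf_le_right
  have hub : Cm u b := cm_of_le_compl inf_le_left
  have h1 : c ⊓ (u ⊔ b) = (c ⊓ u) ⊔ (c ⊓ b) := fh hOM huc hub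
  rw [sup_comm b u, h1]
  apply sup_le
  · exact le_sup_of_le_left (le_trans inf_le_right inf_le_left)
  · exact le_sup_of_le_right (le_inf inf_le_right inf_le_left)

end OLAux

open OLAux

/-- An orthomodular ortholattice satisfies the distributive inference iff it
satisfies the 3OA law. -/
theorem stmt_9 (α : Type*) [Ortholattice α]
    (hOM : ∀ a b : α, a ≤ b → a ⊔ (aᶜ ⊓ b) = b) :
    (∀ a b c d e f : α,
        d ≤ olImp1 a c → d ⊓ olImp1 b c ≤ e → e ⊔ f ≤ oa3 c a b →
          d ⊓ (e ⊔ f) = (d ⊓ e) ⊔ (d ⊓ f)) ↔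
      (∀ a b c : α, olImp1 a c ⊓ oa3 c a b ≤ olImp1 b c) := by
  constructor
  · intro hDist a b c
    have key := hDist a b c (olImp1 a c) (olImp1 a c ⊓ olImp1 b c)
      (olImp1 aᶜ c ⊓ olImp1 bᶜ c) le_rfl le_rfl (le_of_eq rfl)
    rw [show (olImp1 a c ⊓ olImp1 b c) ⊔ (olImp1 aᶜ c ⊓ olImp1 bᶜ c) = oa3 c a b from rfl] at key
    rw [key]
    apply sup_le
    · exact le_trans inf_le_right inf_le_right
    · -- olImp1 a c ⊓ (olImp1 aᶜ c ⊓ olImp1 bᶜ c) ≤ olImp1 b c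
      have h1 : olImp1 a c ⊓ (olImp1 aᶜ c ⊓ olImp1 bᶜ c) ≤ c ⊓ olImp1 bᶜ c := by
        refine le_inf ?_ (le_trans inf_le_right inf_le_right)
        have := lemA hOM a c
        calc olImp1 a c ⊓ (olImp1 aᶜ c ⊓ olImp1 bᶜ c)
            ≤ olImp1 a c ⊓ olImp1 aᶜ c :=
              le_inf inf_le_left (le_trans inf_le_right inf_le_left)
          _ ≤ c := this
      exact le_trans h1 (lemB hOM b c)
  · intro h3 a b c d e f hd hde hef
    apply le_antisymm
    · have h1 : d ⊓ (e ⊔ f) ≤ olImp1 b c := by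
        calc d ⊓ (e ⊔ f) ≤ olImp1 a c ⊓ oa3 c a b :=
              le_inf (le_trans inf_le_left hd) (le_trans inf_le_right hef)
          _ ≤ olImp1 b c := h3 a b c
      have h2 : d ⊓ (e ⊔ f) ≤ e := le_trans (le_inf inf_le_left h1) hde
      exact le_sup_of_le_left (le_inf inf_le_left h2)
    · exact sup_le (inf_le_inf_left d le_sup_left) (inf_le_inf_left d le_sup_right)
end

section
/- Let L be an orthomodular ortholattice and define the Sasaki projection φ_a(b) := a ⊓ (aᶜ ⊔ b). Then L satisfies, for all a, b, c ∈ L, the Godowski–Greechie equation φ_{bᶜ}(a) ⊔ α(a,b,c) = φ_{cᶜ}(a) ⊔ α(a,b,c), where α(a,b,c) := (b ⊔ c) ⊓ (φ_{bᶜ}(a) ⊔ φ_{cᶜ}(a)), if and only if L satisfies the 3OA law: for all a, b, c ∈ L, (a →₁ c) ⊓ (a ≡c b) ≤ b →₁ c. -/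
/-- The Sasaki projection `φ_a(b) = a ⊓ (aᶜ ⊔ b)`. -/
def sasaki {α : Type*} [Ortholattice α] (a b : α) : α := a ⊓ (aᶜ ⊔ b)

section Aux
variable {α : Type*} [Ortholattice α]

lemma occ (x : α) : xᶜᶜ = x := Ortholattice.compl_compl x

lemma oanti {x y : α} (h : x ≤ y) : yᶜ ≤ xᶜ := Ortholattice.compl_antitone x y h

lemma ocompl_sup (x y : α) : (x ⊔ y)ᶜ = xᶜ ⊓ yᶜ := by
  apply le_antisymm (le_inf (oanti le_sup_left) (oanti le_sup_right))
  have : x ⊔ y ≤ (xᶜ ⊓ yᶜ)ᶜ := by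
    apply sup_le
    · have := oanti (inf_le_left (a := xᶜ) (b := yᶜ)); rwa [occ] at this
    · have := oanti (inf_le_right (a := xᶜ) (b := yᶜ)); rwa [occ] at this
  have := oanti this; rwa [occ] at this

lemma ocompl_inf (x y : α) : (x ⊓ y)ᶜ = xᶜ ⊔ yᶜ := by
  have : (xᶜ ⊔ yᶜ)ᶜ = x ⊓ y := by rw [ocompl_sup, occ, occ]
  rw [← this, occ]

lemma inf_compl' (x : α) : xᶜ ⊓ x = ⊥ := by
  rw [inf_comm]; exact Ortholattice.inf_compl x

/-- bridge: `u ⊓ v ≤ w ↔ wᶜ ≤ uᶜ ⊔ vᶜ` -/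
lemma obridge {u v w : α} : u ⊓ v ≤ w ↔ wᶜ ≤ uᶜ ⊔ vᶜ := by
  constructor
  · intro h; have := oanti h; rwa [ocompl_inf] at this
  · intro h; have := oanti h; rwa [occ, ocompl_sup, occ, occ] at this

/-- dual orthomodular law -/
lemma dOM (hOM : ∀ a b : α, a ≤ b → a ⊔ (aᶜ ⊓ b) = b) {a b : α} (h : a ≤ b) : b ⊓ (bᶜ ⊔ a) = a := by
  have h1 := hOM bᶜ aᶜ (oanti h)
  have h2 := congrArg (·ᶜ) h1
  simpa [ocompl_sup, ocompl_inf, occ] using h2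

/-- Key lemma: with `e = p ⊓ (pᶜ ⊔ x)`, we have `eᶜ ⊓ (e ⊔ x) = pᶜ ⊓ (p ⊔ x)`. -/
lemma lemA (hOM : ∀ a b : α, a ≤ b → a ⊔ (aᶜ ⊓ b) = b) (p x : α) :
    (p ⊓ (pᶜ ⊔ x))ᶜ ⊓ ((p ⊓ (pᶜ ⊔ x)) ⊔ x) = pᶜ ⊓ (p ⊔ x) := by
  set y := pᶜ ⊔ x with hy
  set e := p ⊓ y with he
  have hec : eᶜ = pᶜ ⊔ yᶜ := by rw [he, ocompl_inf]
  have h1 : eᶜ ⊓ y = pᶜ := by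
    rw [hec, inf_comm, sup_comm]
    exact dOM hOM le_sup_left
  have h2 : e ⊔ x = (p ⊔ x) ⊓ y := by
    have huv : e ⊔ x ≤ (p ⊔ x) ⊓ y :=
      sup_le (le_inf (inf_le_left.trans le_sup_left) inf_le_right)
        (le_inf le_sup_right le_sup_right)
    have hom := hOM _ _ huv
    have hzero : (e ⊔ x)ᶜ ⊓ ((p ⊔ x) ⊓ y) = ⊥ := by
      apply le_antisymm _ bot_le
      have hle : (e ⊔ x)ᶜ ⊓ ((p ⊔ x) ⊓ y) ≤ (p ⊔ x)ᶜ ⊓ (p ⊔ x) := by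
        apply le_inf
        · rw [ocompl_sup p x]
          apply le_inf
          · calc (e ⊔ x)ᶜ ⊓ ((p ⊔ x) ⊓ y) ≤ eᶜ ⊓ y := by
                  apply le_inf
                  · exact inf_le_left.trans (by rw [ocompl_sup]; exact inf_le_left)
                  · exact inf_le_right.trans inf_le_right
              _ = pᶜ := h1
          · exact inf_le_left.trans (by rw [ocompl_sup]; exact inf_le_right)
        · exact inf_le_right.trans inf_le_left
      calc (e ⊔ x)ᶜ ⊓ ((p ⊔ x) ⊓ y) ≤ (p ⊔ x)ᶜ ⊓ (p ⊔ x) := hle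
        _ = ⊥ := inf_compl' _
    rw [hzero, sup_bot_eq] at hom
    exact hom
  rw [h2, inf_comm (p ⊔ x) y, ← inf_assoc, h1]

end Aux

section Main
variable {α : Type*} [Ortholattice α]

lemma compl_olImp1 (x y : α) : (olImp1 x y)ᶜ = x ⊓ (xᶜ ⊔ yᶜ) := by
  rw [olImp1, ocompl_sup, ocompl_inf, occ]

lemma compl_oa3 (c a b : α) :
    (oa3 c a b)ᶜ = ((a ⊓ (aᶜ ⊔ cᶜ)) ⊔ (b ⊓ (bᶜ ⊔ cᶜ))) ⊓
      ((aᶜ ⊓ (a ⊔ cᶜ)) ⊔ (bᶜ ⊓ (b ⊔ cᶜ))) := by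
  rw [oa3, ocompl_sup, ocompl_inf, ocompl_inf, compl_olImp1, compl_olImp1,
    compl_olImp1, compl_olImp1]
  simp only [occ]

/-- Complemented form of the 3OA inequality. -/
lemma c3OA_iff (a b c : α) :
    olImp1 a c ⊓ oa3 c a b ≤ olImp1 b c ↔
      b ⊓ (bᶜ ⊔ cᶜ) ≤ (a ⊓ (aᶜ ⊔ cᶜ)) ⊔
        (((a ⊓ (aᶜ ⊔ cᶜ)) ⊔ (b ⊓ (bᶜ ⊔ cᶜ))) ⊓
          ((aᶜ ⊓ (a ⊔ cᶜ)) ⊔ (bᶜ ⊓ (b ⊔ cᶜ)))) := by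
  rw [obridge, compl_olImp1, compl_olImp1, compl_oa3]

lemma lemA' (hOM : ∀ a b : α, a ≤ b → a ⊔ (aᶜ ⊓ b) = b) (p x : α) :
    (pᶜ ⊓ (p ⊔ x))ᶜ ⊓ ((pᶜ ⊓ (p ⊔ x)) ⊔ x) = p ⊓ (pᶜ ⊔ x) := by
  have h := lemA hOM pᶜ x
  simpa only [occ] using h

theorem stmt_16' (hOM : ∀ a b : α, a ≤ b → a ⊔ (aᶜ ⊓ b) = b) :
    (∀ a b c : α,
        sasaki bᶜ a ⊔ ((b ⊔ c) ⊓ (sasaki bᶜ a ⊔ sasaki cᶜ a)) =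
          sasaki cᶜ a ⊔ ((b ⊔ c) ⊓ (sasaki bᶜ a ⊔ sasaki cᶜ a))) ↔
      (∀ a b c : α, olImp1 a c ⊓ oa3 c a b ≤ olImp1 b c) := by
  constructor
  · -- GG ⇒ 3OA
    intro hGG a b c
    rw [c3OA_iff]
    set B := aᶜ ⊓ (a ⊔ cᶜ) with hB
    set C := bᶜ ⊓ (b ⊔ cᶜ) with hC
    have hA : sasaki Bᶜ cᶜ = a ⊓ (aᶜ ⊔ cᶜ) := by
      rw [sasaki, occ, hB]
      exact lemA' hOM a cᶜ
    have hA' : sasaki Cᶜ cᶜ = b ⊓ (bᶜ ⊔ cᶜ) := by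
      rw [sasaki, occ, hC]
      exact lemA' hOM b cᶜ
    have hgg := hGG cᶜ B C
    rw [hA, hA'] at hgg
    calc b ⊓ (bᶜ ⊔ cᶜ)
        ≤ b ⊓ (bᶜ ⊔ cᶜ) ⊔ ((B ⊔ C) ⊓ ((a ⊓ (aᶜ ⊔ cᶜ)) ⊔ (b ⊓ (bᶜ ⊔ cᶜ)))) := le_sup_left
      _ = (a ⊓ (aᶜ ⊔ cᶜ)) ⊔ ((B ⊔ C) ⊓ ((a ⊓ (aᶜ ⊔ cᶜ)) ⊔ (b ⊓ (bᶜ ⊔ cᶜ)))) := hgg.symm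
      _ = (a ⊓ (aᶜ ⊔ cᶜ)) ⊔ (((a ⊓ (aᶜ ⊔ cᶜ)) ⊔ (b ⊓ (bᶜ ⊔ cᶜ))) ⊓ (B ⊔ C)) := by
          rw [inf_comm (B ⊔ C)]
  · -- 3OA ⇒ GG
    intro hOA a b c
    have key : ∀ u v : α, vᶜ ⊓ (v ⊔ a) ≤
        uᶜ ⊓ (u ⊔ a) ⊔ ((v ⊔ u) ⊓ (vᶜ ⊓ (v ⊔ a) ⊔ uᶜ ⊓ (u ⊔ a))) := by
      intro u v
      have h := (c3OA_iff uᶜ vᶜ aᶜ).mp (hOA uᶜ vᶜ aᶜ)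
      simp only [occ] at h
      refine h.trans (sup_le_sup_left ?_ _)
      apply le_inf
      · exact inf_le_right.trans (sup_le (inf_le_left.trans le_sup_right)
          (inf_le_left.trans le_sup_left))
      · exact inf_le_left.trans (sup_le le_sup_right le_sup_left)
    simp only [sasaki, occ]
    apply le_antisymm
    · apply sup_le _ le_sup_right
      have h := key c b
      refine h.trans (sup_le_sup_left ?_ _)
      exact le_inf (inf_le_left.trans (sup_le le_sup_left le_sup_right))
        (inf_le_right.trans (sup_le le_sup_left le_sup_right))
    · apply sup_le _ le_sup_right
      have h := key b c
      refine h.trans (sup_le_sup_left ?_ _)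
      exact le_inf (inf_le_left.trans (sup_le le_sup_right le_sup_left))
        (inf_le_right.trans (sup_le le_sup_right le_sup_left))

end Main

/-- An orthomodular ortholattice satisfies the Godowski–Greechie equation
`φ_{bᶜ}(a) ⊔ α(a,b,c) = φ_{cᶜ}(a) ⊔ α(a,b,c)` iff it satisfies the 3OA law. -/
theorem stmt_16 (α : Type*) [Ortholattice α]
    (hOM : ∀ a b : α, a ≤ b → a ⊔ (aᶜ ⊓ b) = b) :
    (∀ a b c : α,
        sasaki bᶜ a ⊔ ((b ⊔ c) ⊓ (sasaki bᶜ a ⊔ sasaki cᶜ a)) =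
          sasaki cᶜ a ⊔ ((b ⊔ c) ⊓ (sasaki bᶜ a ⊔ sasaki cᶜ a))) ↔
      (∀ a b c : α, olImp1 a c ⊓ oa3 c a b ≤ olImp1 b c) := stmt_16' hOM
end
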